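/- For block covariance matrices Σ¹ₓᵧ and Σ²ₓᵧ of two jointly Gaussian vectors (with submatrices Σ¹ₓ, Σ²ₓ obtained by deleting the row and column corresponding to y), the conditional LogDet divergence is nonnegative: D_ℓD(Σ¹ₓᵧ ‖ Σ²ₓᵧ) − D_ℓD(Σ¹ₓ ‖ Σ²ₓ) ≥ 0. -/

import Mathlib

open Matrix

/-- The LogDet divergence on `n×n` matrices (with `n` the size of the index type). -/
noncomputable def logDetDiv {n : ℕ} (A B : Matrix (Fin n) (Fin n) ℝ) : ℝ :=
  Matrix.trace (B⁻¹ * A) + Real.log (Matrix.det B / Matrix.det A) - n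


lemma real_conjTranspose_eq_transpose {m n : Type*} (A : Matrix m n ℝ) : Aᴴ = Aᵀ := by
  ext i j; simp [conjTranspose_apply]

lemma myPosDef_submatrix_equiv {m n : Type*} [Fintype m] [DecidableEq m] [Fintype n]
    [DecidableEq n] {M : Matrix m m ℝ} (hM : M.PosDef) (e : n ≃ m) :
    (M.submatrix e e).PosDef := by
  refine .of_dotProduct_mulVec_pos ((isHermitian_submatrix_equiv e).2 hM.1) fun x hx => ?_
  have hx' : (x ∘ e.symm) ≠ 0 := by
    intro h
    apply hx
    funext i
    have := congrFun h (e i)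
    simpa using this
  have := hM.dotProduct_mulVec_pos hx'
  convert this using 1
  simp only [dotProduct, mulVec, submatrix_apply, star_trivial, Function.comp]
  refine Fintype.sum_equiv e _ _ fun i => ?_
  simp only [Equiv.symm_apply_apply]
  congr 1
  refine (Fintype.sum_equiv e _ _ fun j => ?_)
  simp

lemma myPosDef_toBlocks₁₁ {m n : Type*} [Fintype m] [DecidableEq m] [Fintype n] [DecidableEq n]
    {M : Matrix (m ⊕ n) (m ⊕ n) ℝ} (hM : M.PosDef) : (M.toBlocks₁₁).PosDef := by
  refine .of_dotProduct_mulVec_pos ?_ fun x hx => ?_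
  · ext i j
    have := congrFun (congrFun hM.1 (Sum.inl i)) (Sum.inl j)
    simpa [conjTranspose_apply, toBlocks₁₁] using this
  · have hy : (Sum.elim x 0 : m ⊕ n → ℝ) ≠ 0 := by
      intro h
      exact hx (funext fun i => congrFun h (Sum.inl i))
    have := hM.dotProduct_mulVec_pos hy
    convert this using 1
    simp [dotProduct, mulVec, Fintype.sum_sum_type, toBlocks₁₁]

lemma myTrace_submatrix_equiv {m n : Type*} [Fintype m] [Fintype n] (A : Matrix m m ℝ)
    (e : n ≃ m) : trace (A.submatrix e e) = trace A := by
  simp only [Matrix.trace, diag, submatrix_apply]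
  exact Equiv.sum_comp e (fun i => A i i)

lemma myTrace_fromBlocks {m n : Type*} [Fintype m] [Fintype n] (A : Matrix m m ℝ)
    (B : Matrix m n ℝ) (C : Matrix n m ℝ) (D : Matrix n n ℝ) :
    trace (fromBlocks A B C D) = trace A + trace D := by
  simp [Matrix.trace, Fintype.sum_sum_type, fromBlocks, diag]

lemma key {p : ℕ} (A1 A2 : Matrix (Fin p) (Fin p) ℝ) (B1 B2 : Matrix (Fin p) (Fin 1) ℝ)
    (D1 D2 : Matrix (Fin 1) (Fin 1) ℝ)
    (h1 : (fromBlocks A1 B1 B1ᵀ D1).PosDef) (h2 : (fromBlocks A2 B2 B2ᵀ D2).PosDef) :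
    0 ≤ (trace ((fromBlocks A2 B2 B2ᵀ D2)⁻¹ * fromBlocks A1 B1 B1ᵀ D1)
          + Real.log ((fromBlocks A2 B2 B2ᵀ D2).det / (fromBlocks A1 B1 B1ᵀ D1).det))
        - (trace (A2⁻¹ * A1) + Real.log (A2.det / A1.det)) - 1 := by
  have hA1 : A1.PosDef := by simpa using myPosDef_toBlocks₁₁ h1
  have hA2 : A2.PosDef := by simpa using myPosDef_toBlocks₁₁ h2
  haveI iA1 : Invertible A1 := A1.invertibleOfIsUnitDet hA1.det_pos.ne'.isUnit
  haveI iA2 : Invertible A2 := A2.invertibleOfIsUnitDet hA2.det_pos.ne'.isUnit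
  haveI iM2 : Invertible (fromBlocks A2 B2 B2ᵀ D2) :=
    (fromBlocks A2 B2 B2ᵀ D2).invertibleOfIsUnitDet h2.det_pos.ne'.isUnit
  set s1 : ℝ := (D1 - B1ᵀ * A1⁻¹ * B1) 0 0 with hs1def
  set s2 : ℝ := (D2 - B2ᵀ * A2⁻¹ * B2) 0 0 with hs2def
  have hiA1 : (⅟A1 : Matrix (Fin p) (Fin p) ℝ) = A1⁻¹ := invOf_eq_nonsing_inv A1
  have hiA2 : (⅟A2 : Matrix (Fin p) (Fin p) ℝ) = A2⁻¹ := invOf_eq_nonsing_inv A2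
  -- determinants
  have hdet1 : (fromBlocks A1 B1 B1ᵀ D1).det = A1.det * s1 := by
    rw [det_fromBlocks₁₁, hiA1, det_fin_one]
  have hdet2 : (fromBlocks A2 B2 B2ᵀ D2).det = A2.det * s2 := by
    rw [det_fromBlocks₁₁, hiA2, det_fin_one]
  have hs1pos : 0 < s1 := by
    have := h1.det_pos
    rw [hdet1] at this
    nlinarith [hA1.det_pos]
  have hs2pos : 0 < s2 := by
    have := h2.det_pos
    rw [hdet2] at this
    nlinarith [hA2.det_pos]
  haveI iS2 : Invertible (D2 - B2ᵀ * ⅟A2 * B2) := by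
    refine (D2 - B2ᵀ * ⅟A2 * B2).invertibleOfIsUnitDet ?_
    rw [hiA2, det_fin_one]
    exact hs2pos.ne'.isUnit
  have hS2inv : (D2 - B2ᵀ * A2⁻¹ * B2)⁻¹ = s2⁻¹ • (1 : Matrix (Fin 1) (Fin 1) ℝ) := by
    rw [inv_def, adjugate_fin_one, det_fin_one, Ring.inverse_eq_inv]
  have hinv : (fromBlocks A2 B2 B2ᵀ D2)⁻¹ =
      fromBlocks (A2⁻¹ + A2⁻¹ * B2 * (s2⁻¹ • (1 : Matrix (Fin 1) (Fin 1) ℝ)) * B2ᵀ * A2⁻¹)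
        (-(A2⁻¹ * B2 * (s2⁻¹ • (1 : Matrix (Fin 1) (Fin 1) ℝ))))
        (-((s2⁻¹ • (1 : Matrix (Fin 1) (Fin 1) ℝ)) * B2ᵀ * A2⁻¹))
        (s2⁻¹ • (1 : Matrix (Fin 1) (Fin 1) ℝ)) := by
    have hSi : (⅟(D2 - B2ᵀ * ⅟A2 * B2) : Matrix (Fin 1) (Fin 1) ℝ)
        = s2⁻¹ • (1 : Matrix (Fin 1) (Fin 1) ℝ) := by
      rw [invOf_eq_nonsing_inv, hiA2, hS2inv]
    rw [← invOf_eq_nonsing_inv, invOf_fromBlocks₁₁_eq, hSi, hiA2]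
  -- trace identity
  have e1 : ∀ (X : Matrix (Fin p) (Fin 1) ℝ) (Y : Matrix (Fin 1) (Fin p) ℝ),
      trace (X * Y) = (Y * X) 0 0 := fun X Y => by rw [trace_mul_comm, trace_fin_one]
  have htr : trace ((fromBlocks A2 B2 B2ᵀ D2)⁻¹ * fromBlocks A1 B1 B1ᵀ D1)
      = trace (A2⁻¹ * A1) + s2⁻¹ * ((B2ᵀ * A2⁻¹ * A1 * (A2⁻¹ * B2)) 0 0
          - (B1ᵀ * (A2⁻¹ * B2)) 0 0 - (B2ᵀ * A2⁻¹ * B1) 0 0 + D1 0 0) := by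
    rw [hinv, fromBlocks_multiply, myTrace_fromBlocks]
    simp only [Matrix.smul_mul, Matrix.mul_smul, Matrix.one_mul, Matrix.mul_one,
      Matrix.neg_mul, Matrix.add_mul, trace_add, trace_smul, trace_neg, smul_eq_mul]
    have c1 : A2⁻¹ * B2 * B2ᵀ * A2⁻¹ * A1 = (A2⁻¹ * B2) * (B2ᵀ * A2⁻¹ * A1) := by
      simp [Matrix.mul_assoc]
    have c2 : A2⁻¹ * B2 * B1ᵀ = (A2⁻¹ * B2) * B1ᵀ := rfl
    rw [c1, e1 (A2⁻¹ * B2) (B2ᵀ * A2⁻¹ * A1), c2, e1 (A2⁻¹ * B2) B1ᵀ,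
      trace_fin_one (B2ᵀ * A2⁻¹ * B1), trace_fin_one D1]
    ring
  -- quadratic term
  set v : Matrix (Fin p) (Fin 1) ℝ := B1 - A1 * (A2⁻¹ * B2) with hv
  set q : ℝ := (vᵀ * A1⁻¹ * v) 0 0 with hqdef
  have hA1t : A1ᵀ = A1 := by
    have := hA1.1
    rwa [IsHermitian, real_conjTranspose_eq_transpose] at this
  have hA2it : (A2⁻¹)ᵀ = A2⁻¹ := by
    have h : A2ᵀ = A2 := by
      have := hA2.1
      rwa [IsHermitian, real_conjTranspose_eq_transpose] at this
    rw [transpose_nonsing_inv, h]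
  have hq0 : 0 ≤ q := by
    have hps : (vᵀ * A1⁻¹ * v).PosSemidef := by
      have := hA1.inv.posSemidef.conjTranspose_mul_mul_same v
      rwa [real_conjTranspose_eq_transpose] at this
    have := hps.dotProduct_mulVec_nonneg (fun _ => 1)
    simpa [dotProduct, mulVec, Fin.sum_univ_one] using this
  have hmx : vᵀ * A1⁻¹ * v = B1ᵀ * A1⁻¹ * B1 - B1ᵀ * (A2⁻¹ * B2) - B2ᵀ * A2⁻¹ * B1
      + B2ᵀ * A2⁻¹ * A1 * (A2⁻¹ * B2) := by
    rw [hv]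
    simp only [transpose_sub, transpose_mul, hA1t, hA2it, Matrix.sub_mul, Matrix.mul_sub,
      Matrix.mul_assoc, Matrix.nonsing_inv_mul_cancel_left _ _ hA1.det_pos.ne'.isUnit,
      Matrix.mul_nonsing_inv_cancel_left _ _ hA1.det_pos.ne'.isUnit]
    abel
  have hexp : (B2ᵀ * A2⁻¹ * A1 * (A2⁻¹ * B2)) 0 0 - (B1ᵀ * (A2⁻¹ * B2)) 0 0
      - (B2ᵀ * A2⁻¹ * B1) 0 0 + D1 0 0 = s1 + q := by
    have := congrFun (congrFun hmx 0) 0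
    simp only [Matrix.sub_apply, Matrix.add_apply] at this ⊢
    rw [hqdef, hs1def]
    simp only [Matrix.sub_apply]
    linarith [this]
  -- logs
  have hlog : Real.log ((fromBlocks A2 B2 B2ᵀ D2).det / (fromBlocks A1 B1 B1ᵀ D1).det)
      = Real.log (A2.det / A1.det) + Real.log (s2 / s1) := by
    rw [hdet1, hdet2]
    rw [show A2.det * s2 / (A1.det * s1) = (A2.det / A1.det) * (s2 / s1) by
      field_simp]
    exact Real.log_mul (div_pos hA2.det_pos hA1.det_pos).ne' (div_pos hs2pos hs1pos).ne'
  rw [htr, hexp, hlog]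
  have hlogneg : Real.log (s2 / s1) = - Real.log (s1 / s2) := by
    rw [← Real.log_inv, inv_div]
  have hle : Real.log (s1 / s2) ≤ s1 / s2 - 1 :=
    Real.log_le_sub_one_of_pos (div_pos hs1pos hs2pos)
  have hsplit : s2⁻¹ * (s1 + q) = s1 / s2 + s2⁻¹ * q := by
    rw [div_eq_inv_mul]; ring
  have hqq : 0 ≤ s2⁻¹ * q := mul_nonneg (inv_pos.2 hs2pos).le hq0
  rw [hlogneg, hsplit]
  linarith

/-- For `(p+1)×(p+1)` positive definite block covariance matrices `Σ¹ₓᵧ`,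
`Σ²ₓᵧ` with leading `p×p` principal submatrices `Σ¹ₓ`, `Σ²ₓ` (deleting the last row and
column, which corresponds to `y`), the conditional LogDet divergence is nonnegative:
`D_ℓD(Σ¹ₓᵧ‖Σ²ₓᵧ) − D_ℓD(Σ¹ₓ‖Σ²ₓ) ≥ 0`. -/
theorem conditional_logDetDiv_nonneg {p : ℕ}
    (S1 S2 : Matrix (Fin (p + 1)) (Fin (p + 1)) ℝ)
    (h1 : S1.PosDef) (h2 : S2.PosDef) :
    0 ≤ logDetDiv S1 S2 -
        logDetDiv (S1.submatrix (Fin.castSucc) (Fin.castSucc))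
          (S2.submatrix (Fin.castSucc) (Fin.castSucc)) := by

  classical
  set M1 := S1.submatrix (finSumFinEquiv (m := p) (n := 1)) (finSumFinEquiv (m := p) (n := 1)) with hM1def
  set M2 := S2.submatrix (finSumFinEquiv (m := p) (n := 1)) (finSumFinEquiv (m := p) (n := 1)) with hM2def
  have hM1 : M1.PosDef := myPosDef_submatrix_equiv h1 finSumFinEquiv
  have hM2 : M2.PosDef := myPosDef_submatrix_equiv h2 finSumFinEquiv
  set A1 := toBlocks₁₁ M1 with hA1def
  set A2 := toBlocks₁₁ M2 with hA2def
  have hb : ∀ (M : Matrix (Fin p ⊕ Fin 1) (Fin p ⊕ Fin 1) ℝ), M.PosDef →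
      M = fromBlocks (toBlocks₁₁ M) (toBlocks₁₂ M) (toBlocks₁₂ M)ᵀ (toBlocks₂₂ M) := by
    intro M hM
    have h21 : toBlocks₂₁ M = (toBlocks₁₂ M)ᵀ := by
      ext i j
      have := congrFun (congrFun hM.1 (Sum.inl j)) (Sum.inr i)
      simpa [conjTranspose_apply, toBlocks₂₁, toBlocks₁₂] using this
    conv_lhs => rw [← fromBlocks_toBlocks M]
    rw [h21]
  have hb1 : M1 = fromBlocks A1 (toBlocks₁₂ M1) (toBlocks₁₂ M1)ᵀ (toBlocks₂₂ M1) := hb M1 hM1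
  have hb2 : M2 = fromBlocks A2 (toBlocks₁₂ M2) (toBlocks₁₂ M2)ᵀ (toBlocks₂₂ M2) := hb M2 hM2
  have hsub1 : S1.submatrix Fin.castSucc Fin.castSucc = A1 := by
    ext i j; rfl
  have hsub2 : S2.submatrix Fin.castSucc Fin.castSucc = A2 := by
    ext i j; rfl
  have hkey := key A1 A2 (toBlocks₁₂ M1) (toBlocks₁₂ M2) (toBlocks₂₂ M1) (toBlocks₂₂ M2)
    (hb1 ▸ hM1) (hb2 ▸ hM2)
  rw [← hb1, ← hb2] at hkey
  have htr : trace (M2⁻¹ * M1) = trace (S2⁻¹ * S1) := by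
    rw [hM2def, hM1def, inv_submatrix_equiv, submatrix_mul_equiv, myTrace_submatrix_equiv]
  have hd1 : M1.det = S1.det := det_submatrix_equiv_self finSumFinEquiv S1
  have hd2 : M2.det = S2.det := det_submatrix_equiv_self finSumFinEquiv S2
  rw [htr, hd1, hd2] at hkey
  simp only [logDetDiv]
  rw [hsub1, hsub2]
  push_cast
  linarith [hkey]
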